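/- For any integers b_1, b_2, ..., b_m, the product ∏_{1 ≤ i < j ≤ m} (j − i) divides the product ∏_{1 ≤ i < j ≤ m} (b_j − b_i). -/

import Mathlib

lemma aux_pair_prod (m : ℕ) (f : Fin m → Fin m → ℤ) :
    ∏ p ∈ Finset.univ.filter (fun p : Fin m × Fin m => p.1 < p.2), f p.1 p.2
      = ∏ i, ∏ j ∈ Finset.Ioi i, f i j := by
  rw [Finset.prod_filter, ← Finset.univ_product_univ, Finset.prod_product]
  refine Finset.prod_congr rfl fun i _ => ?_
  have h : Finset.Ioi i = Finset.filter (fun j => i < j) Finset.univ := by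
    ext j; simp
  rw [h, Finset.prod_filter]

/-- For any integers `b 1, ..., b m`, the product `∏_{i<j} (j - i)` divides
`∏_{i<j} (b j - b i)`. -/
theorem stmt_13 (m : ℕ) (b : Fin m → ℤ) :
    (∏ p ∈ Finset.univ.filter (fun p : Fin m × Fin m => p.1 < p.2),
        ((p.2 : ℤ) - (p.1 : ℤ))) ∣
      ∏ p ∈ Finset.univ.filter (fun p : Fin m × Fin m => p.1 < p.2),
        (b p.2 - b p.1) := by
  cases m with
  | zero => simp
  | succ n =>
    rw [aux_pair_prod _ (fun i j => ((j : ℤ) - (i : ℤ))), aux_pair_prod _ (fun i j => b j - b i), ← Matrix.det_vandermonde, ← Matrix.det_vandermonde]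
    have h1 := Matrix.det_vandermonde_id_eq_superFactorial (R := ℤ) n
    have h2 := Matrix.superFactorial_dvd_vandermonde_det b
    have : (Matrix.vandermonde fun i : Fin (n+1) => (i : ℤ)).det
        = (Nat.superFactorial n : ℤ) := by
      exact h1
    rw [this]
    exact h2
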